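/- Let B₀ > 0 and let μ(B₀,1) be the lowest eigenvalue of the harmonic oscillator −d²/du² + B₀²u² with Dirichlet boundary conditions on (−1,1). Then B₀ < μ(B₀,1) ≤ B₀ + (1+δ)·(√2/π^{1/4})·B₀^{5/4} e^{−B₀/2} for any fixed δ > 0 and all B₀ sufficiently large; in particular μ(B₀,1) = B₀ + O(B₀^{5/4} e^{−B₀/2}) as B₀ → +∞. -/

import Mathlib

open MeasureTheory Filter


noncomputable def g0 : ℝ → ℝ := fun u => Real.smoothTransition ((16/7) * (1 - u^2))

lemma g0_contDiff : ContDiff ℝ 1 g0 :=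
  Real.smoothTransition.contDiff.comp (by fun_prop)

lemma g0_zero {u : ℝ} (h : 1 ≤ |u|) : g0 u = 0 := by
  apply Real.smoothTransition.zero_of_nonpos
  have : 1 ≤ u^2 := by nlinarith [sq_abs u]
  nlinarith

lemma g0_one {u : ℝ} (h : |u| ≤ 3/4) : g0 u = 1 := by
  apply Real.smoothTransition.one_of_one_le
  have : u^2 ≤ 9/16 := by nlinarith [sq_abs u, abs_nonneg u]
  nlinarith

lemma g0_nonneg (u : ℝ) : 0 ≤ g0 u := Real.smoothTransition.nonneg _
lemma g0_le_one (u : ℝ) : g0 u ≤ 1 := Real.smoothTransition.le_one _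

lemma deriv_g0_zero {u : ℝ} (h : |u| < 3/4) : deriv g0 u = 0 := by
  have he : g0 =ᶠ[nhds u] (fun _ => (1:ℝ)) := by
    filter_upwards [eventually_abs_sub_lt u (by linarith : (0:ℝ) < 3/4 - |u|)] with v hv
    · exact g0_one (by have := (abs_sub_abs_le_abs_sub v u).trans_lt hv; linarith)
  rw [he.deriv_eq, deriv_const]

lemma cont_deriv_g0 : Continuous (deriv g0) := g0_contDiff.continuous_deriv le_rfl

lemma ioo_int (f : ℝ → ℝ) : ∫ u in Set.Ioo (-1 : ℝ) 1, f u = ∫ u in (-1:ℝ)..1, f u := by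
  rw [intervalIntegral.integral_of_le (by norm_num), integral_Ioc_eq_integral_Ioo]

lemma energy_identity (B₀ : ℝ) (ψ : ℝ → ℝ) (hψ : ContDiff ℝ 1 ψ)
    (h1 : ψ 1 = 0) (h2 : ψ (-1) = 0) :
    ∫ u in (-1:ℝ)..1, ((deriv ψ u)^2 + B₀^2*u^2*(ψ u)^2)
      = B₀ * (∫ u in (-1:ℝ)..1, (ψ u)^2)
        + ∫ u in (-1:ℝ)..1, (deriv ψ u + B₀*u*ψ u)^2 := by
  have hc : Continuous ψ := hψ.continuous
  have hc' : Continuous (deriv ψ) := hψ.continuous_deriv le_rfl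
  have hd : ∀ u : ℝ, HasDerivAt ψ (deriv ψ u) u := fun u =>
    ((hψ.differentiable one_ne_zero) u).hasDerivAt
  have hP : ∀ u : ℝ, HasDerivAt (fun v => B₀*v*(ψ v)^2)
      (B₀*(ψ u)^2 + B₀*u*(2*ψ u*deriv ψ u)) u := by
    intro u
    have hprod := ((hasDerivAt_id u).const_mul B₀).mul ((hd u).pow 2)
    refine hprod.congr_deriv ?_
    simp only [id, Pi.pow_apply]
    push_cast
    ring
  have hPint : Continuous (fun u : ℝ => B₀*(ψ u)^2 + B₀*u*(2*ψ u*deriv ψ u)) := by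
    fun_prop
  have hFTC : (∫ u in (-1:ℝ)..1, (B₀*(ψ u)^2 + B₀*u*(2*ψ u*deriv ψ u))) = 0 := by
    rw [intervalIntegral.integral_eq_sub_of_hasDerivAt (fun u _ => hP u)
      (hPint.intervalIntegrable _ _)]
    simp [h1, h2]
  have hiE : IntervalIntegrable (fun u => (deriv ψ u)^2 + B₀^2*u^2*(ψ u)^2) volume (-1) 1 := by
    apply Continuous.intervalIntegrable; fun_prop
  have hiS : IntervalIntegrable (fun u => B₀*(ψ u)^2) volume (-1) 1 := by
    apply Continuous.intervalIntegrable; fun_prop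
  have hiP : IntervalIntegrable (fun u => B₀*(ψ u)^2 + B₀*u*(2*ψ u*deriv ψ u)) volume (-1) 1 :=
    hPint.intervalIntegrable _ _
  have key : (fun u => (deriv ψ u + B₀*u*ψ u)^2)
      = fun u => ((deriv ψ u)^2 + B₀^2*u^2*(ψ u)^2) - B₀*(ψ u)^2
          + (B₀*(ψ u)^2 + B₀*u*(2*ψ u*deriv ψ u)) := by
    funext u; ring
  rw [key, intervalIntegral.integral_add (hiE.sub hiS) hiP,
    intervalIntegral.integral_sub hiE hiS, hFTC, intervalIntegral.integral_const_mul]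
  ring

set_option maxHeartbeats 1000000 in
lemma lower_aux (B₀ : ℝ) (hB : 0 ≤ B₀) (ψ : ℝ → ℝ) (hψ : ContDiff ℝ 1 ψ)
    (hz : ∀ u : ℝ, 1 ≤ |u| → ψ u = 0)
    (hn : (∫ u in Set.Ioo (-1:ℝ) 1, (ψ u)^2) = 1) :
    B₀ + Real.exp (-B₀)/4 ≤ ∫ u in Set.Ioo (-1:ℝ) 1, ((deriv ψ u)^2 + B₀^2*u^2*(ψ u)^2) := by
  have hc : Continuous ψ := hψ.continuous
  have hc' : Continuous (deriv ψ) := hψ.continuous_deriv le_rfl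
  have hd : ∀ u : ℝ, HasDerivAt ψ (deriv ψ u) u := fun u =>
    ((hψ.differentiable one_ne_zero) u).hasDerivAt
  rw [ioo_int] at hn ⊢
  set w : ℝ → ℝ := fun u => deriv ψ u + B₀*u*ψ u with hw
  have hwc : Continuous w := by fun_prop
  set ε : ℝ := ∫ u in (-1:ℝ)..1, (w u)^2 with hε
  have hεnn : 0 ≤ ε := intervalIntegral.integral_nonneg (by norm_num)
    (fun u _ => sq_nonneg _)
  have hEid : (∫ u in (-1:ℝ)..1, ((deriv ψ u)^2 + B₀^2*u^2*(ψ u)^2)) = B₀ + ε := by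
    rw [energy_identity B₀ ψ hψ (hz 1 (by norm_num)) (hz (-1) (by norm_num)), hn]
    ring
  rw [hEid]
  -- now show e^{-B₀}/4 ≤ ε
  have hρ : (0:ℝ) < Real.sqrt (Real.exp (-B₀)/2) := Real.sqrt_pos.2 (by positivity)
  set ρ : ℝ := Real.sqrt (Real.exp (-B₀)/2) with hρdef
  have hρsq : ρ^2 = Real.exp (-B₀)/2 := Real.sq_sqrt (by positivity)
  set M : ℝ := ρ/2 + ε/ρ with hM
  have hMnn : 0 ≤ M := by positivity
  -- the exp-weighted primitive
  have hφ : ∀ t : ℝ, HasDerivAt (fun t => ψ t * Real.exp (B₀*t^2/2))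
      (w t * Real.exp (B₀*t^2/2)) t := by
    intro t
    have hin : HasDerivAt (fun t : ℝ => B₀*t^2/2) (B₀*t) t := by
      have := ((hasDerivAt_pow 2 t).const_mul B₀).div_const 2
      refine this.congr_deriv ?_
      push_cast; ring
    have := (hd t).mul hin.exp
    refine this.congr_deriv ?_
    simp only [hw]; ring
  clear_value ε ρ M
  have hsqexp : Real.exp (B₀/2) ^ 2 = Real.exp B₀ := by
    rw [sq, ← Real.exp_add]; ring_nf
  -- pointwise bound
  have hpt : ∀ u ∈ Set.Icc (-1:ℝ) 1, (ψ u)^2 ≤ Real.exp B₀ * M^2 := by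
    intro u hu
    obtain ⟨hu1, hu2⟩ := hu
    have hFTC : (∫ t in u..1, w t * Real.exp (B₀*t^2/2))
        = ψ 1 * Real.exp (B₀*1^2/2) - ψ u * Real.exp (B₀*u^2/2) := by
      exact intervalIntegral.integral_eq_sub_of_hasDerivAt (fun t _ => hφ t)
        ((by fun_prop : Continuous fun t => w t * Real.exp (B₀*t^2/2)).intervalIntegrable _ _)
    rw [hz 1 (by norm_num), zero_mul] at hFTC
    have habs : |ψ u * Real.exp (B₀*u^2/2)| ≤ Real.exp (B₀/2) * M := by
      have h1 : |ψ u * Real.exp (B₀*u^2/2)| = |∫ t in u..1, w t * Real.exp (B₀*t^2/2)| := by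
        rw [hFTC]; rw [abs_sub_comm]; simp
      rw [h1]
      have h2 : |∫ t in u..1, w t * Real.exp (B₀*t^2/2)|
          ≤ ∫ t in u..1, |w t * Real.exp (B₀*t^2/2)| :=
        intervalIntegral.abs_integral_le_integral_abs hu2
      have h3 : (∫ t in u..1, |w t * Real.exp (B₀*t^2/2)|)
          ≤ ∫ t in (-1:ℝ)..1, |w t * Real.exp (B₀*t^2/2)| := by
        apply intervalIntegral.integral_mono_interval hu1 hu2 le_rfl
        · filter_upwards with t using abs_nonneg _
        · exact ((by fun_prop : Continuous fun t => |w t * Real.exp (B₀*t^2/2)|).intervalIntegrable _ _)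
      have h4 : (∫ t in (-1:ℝ)..1, |w t * Real.exp (B₀*t^2/2)|)
          ≤ ∫ t in (-1:ℝ)..1, (ρ/4 + (w t)^2/ρ) * Real.exp (B₀/2) := by
        apply intervalIntegral.integral_mono_on (by norm_num)
          ((by fun_prop : Continuous fun t => |w t * Real.exp (B₀*t^2/2)|).intervalIntegrable _ _)
          ((by fun_prop : Continuous fun t => (ρ/4 + (w t)^2/ρ) * Real.exp (B₀/2)).intervalIntegrable _ _)
        intro t ht
        obtain ⟨ht1, ht2⟩ := ht
        have hexp : Real.exp (B₀*t^2/2) ≤ Real.exp (B₀/2) := by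
          apply Real.exp_le_exp.2
          nlinarith [mul_nonneg hB (mul_nonneg (by linarith : (0:ℝ) ≤ 1 - t)
            (by linarith : (0:ℝ) ≤ t + 1))]
        have hexp0 : (0:ℝ) < Real.exp (B₀*t^2/2) := Real.exp_pos _
        have haw : |w t| ≤ ρ/4 + (w t)^2/ρ := by
          rw [div_add_div _ _ (by norm_num) (ne_of_gt hρ), le_div_iff₀ (by positivity)]
          nlinarith [sq_nonneg (|w t| - ρ/2), sq_abs (w t)]
        have hnn : 0 ≤ ρ/4 + (w t)^2/ρ := le_trans (abs_nonneg _) haw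
        rw [abs_mul, abs_of_pos hexp0]
        calc |w t| * Real.exp (B₀*t^2/2) ≤ (ρ/4 + (w t)^2/ρ) * Real.exp (B₀*t^2/2) :=
              mul_le_mul_of_nonneg_right haw hexp0.le
          _ ≤ (ρ/4 + (w t)^2/ρ) * Real.exp (B₀/2) := mul_le_mul_of_nonneg_left hexp hnn
      have h5 : (∫ t in (-1:ℝ)..1, (ρ/4 + (w t)^2/ρ) * Real.exp (B₀/2))
          = Real.exp (B₀/2) * M := by
        have heq : (fun t => (ρ/4 + (w t)^2/ρ) * Real.exp (B₀/2))
            = fun t => (ρ/4*Real.exp (B₀/2)) + (Real.exp (B₀/2)/ρ) * (w t)^2 := by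
          funext t; field_simp
        rw [heq, intervalIntegral.integral_add (intervalIntegrable_const)
          (((by fun_prop : Continuous fun t => (w t)^2).intervalIntegrable _ _).const_mul _),
          intervalIntegral.integral_const, intervalIntegral.integral_const_mul, ← hε]
        simp only [hM]
        field_simp
        ring
      calc _ ≤ _ := h2
        _ ≤ _ := h3
        _ ≤ _ := h4
        _ = _ := h5
    have hone : (1:ℝ) ≤ Real.exp (B₀*u^2/2) := Real.one_le_exp (by positivity)
    have hfin : |ψ u| ≤ Real.exp (B₀/2) * M := by
      calc |ψ u| ≤ |ψ u| * Real.exp (B₀*u^2/2) := le_mul_of_one_le_right (abs_nonneg _) hone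
        _ = |ψ u * Real.exp (B₀*u^2/2)| := by rw [abs_mul, abs_of_pos (Real.exp_pos _)]
        _ ≤ _ := habs
    calc (ψ u)^2 = |ψ u|^2 := (sq_abs _).symm
      _ ≤ (Real.exp (B₀/2) * M)^2 := by nlinarith [abs_nonneg (ψ u)]
      _ = Real.exp B₀ * M^2 := by rw [mul_pow, hsqexp]
  -- integrate the pointwise bound
  have hint : (1:ℝ) ≤ 2 * (Real.exp B₀ * M^2) := by
    have h6 : (∫ u in (-1:ℝ)..1, (ψ u)^2) ≤ ∫ u in (-1:ℝ)..1, (Real.exp B₀ * M^2) := by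
      apply intervalIntegral.integral_mono_on (by norm_num)
        ((by fun_prop : Continuous fun u => (ψ u)^2).intervalIntegrable _ _)
        intervalIntegrable_const
      exact hpt
    rw [hn, intervalIntegral.integral_const] at h6
    calc (1:ℝ) ≤ (1 - (-1)) • (Real.exp B₀ * M^2) := h6
      _ = 2 * (Real.exp B₀ * M^2) := by norm_num
  -- conclude
  have hmul : Real.exp (-B₀) * Real.exp B₀ = 1 := by rw [← Real.exp_add]; simp
  have hM2 : ρ^2 ≤ M^2 := by nlinarith [Real.exp_pos B₀, Real.exp_pos (-B₀)]
  have hMge : ρ ≤ M := by nlinarith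
  have hεge : Real.exp (-B₀)/4 ≤ ε := by
    have h7 : ρ/2 ≤ ε/ρ := by simp only [hM] at hMge; linarith
    have h8 : ρ^2/2 ≤ ε := by
      rw [div_le_div_iff₀ (by norm_num) hρ] at h7
      nlinarith
    linarith [hρsq ▸ h8]
  linarith

noncomputable def K0 : ℝ := ∫ u in (-1:ℝ)..1, (deriv g0 u)^2

lemma K0_nonneg : 0 ≤ K0 :=
  intervalIntegral.integral_nonneg (by norm_num) (fun u _ => sq_nonneg _)

set_option maxHeartbeats 1000000 in
lemma upper_aux (B₀ : ℝ) (hB : 4 ≤ B₀) :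
    ∃ ψ : ℝ → ℝ, ContDiff ℝ 1 ψ ∧ (∀ u : ℝ, 1 ≤ |u| → ψ u = 0) ∧
    (∫ u in Set.Ioo (-1:ℝ) 1, (ψ u)^2) = 1 ∧
    (∫ u in Set.Ioo (-1:ℝ) 1, ((deriv ψ u)^2 + B₀^2*u^2*(ψ u)^2))
      ≤ B₀ + (Real.exp 1 / 2) * K0 * Real.sqrt B₀ * Real.exp (-(9*B₀)/16) := by
  have hB0 : (0:ℝ) < B₀ := by linarith
  have hsB : (0:ℝ) < Real.sqrt B₀ := Real.sqrt_pos.2 hB0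
  have hgc : Continuous g0 := g0_contDiff.continuous
  have hgc' : Continuous (deriv g0) := cont_deriv_g0
  set D : ℝ := ∫ u in (-1:ℝ)..1, (g0 u)^2 * Real.exp (-B₀*u^2) with hD
  set N : ℝ := ∫ u in (-1:ℝ)..1, (deriv g0 u)^2 * Real.exp (-B₀*u^2) with hN
  -- lower bound on D
  set s : ℝ := 1 / Real.sqrt B₀ with hs
  have hs0 : 0 < s := by positivity
  have hs2 : s ≤ 1/2 := by
    rw [hs, div_le_div_iff₀ hsB (by norm_num)]
    nlinarith [Real.sq_sqrt hB0.le, Real.sqrt_nonneg B₀]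
  have hssq : B₀ * s^2 = 1 := by
    rw [hs]; rw [div_pow, one_pow]
    rw [Real.sq_sqrt hB0.le]
    field_simp
  have hDlb : Real.exp (-1) * (2*s) ≤ D := by
    have h1 : (∫ u in (-s)..s, Real.exp (-1:ℝ)) ≤ ∫ u in (-s)..s, (g0 u)^2 * Real.exp (-B₀*u^2) := by
      apply intervalIntegral.integral_mono_on (by linarith)
        intervalIntegrable_const
        ((by fun_prop : Continuous fun u => (g0 u)^2 * Real.exp (-B₀*u^2)).intervalIntegrable _ _)
      intro u hu
      obtain ⟨hu1, hu2⟩ := hu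
      have habs : |u| ≤ 3/4 := by
        rw [abs_le]; constructor <;> linarith
      rw [g0_one habs, one_pow, one_mul]
      apply Real.exp_le_exp.2
      have husq : u^2 ≤ s^2 := by nlinarith
      nlinarith [mul_le_mul_of_nonneg_left husq hB0.le]
    have h2 : (∫ u in (-s)..s, (g0 u)^2 * Real.exp (-B₀*u^2)) ≤ D := by
      apply intervalIntegral.integral_mono_interval (by linarith) (by linarith) (by linarith)
      · filter_upwards with t using by positivity
      · exact ((by fun_prop : Continuous fun u => (g0 u)^2 * Real.exp (-B₀*u^2)).intervalIntegrable _ _)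
    rw [intervalIntegral.integral_const, smul_eq_mul] at h1
    calc Real.exp (-1) * (2*s) = (s - -s) * Real.exp (-1) := by ring
      _ ≤ _ := h1
      _ ≤ D := h2
  have hDpos : 0 < D := lt_of_lt_of_le (by positivity) hDlb
  -- bound on N
  have hNub : N ≤ Real.exp (-(9*B₀)/16) * K0 := by
    have h1 : (∫ u in (-1:ℝ)..1, (deriv g0 u)^2 * Real.exp (-B₀*u^2))
        ≤ ∫ u in (-1:ℝ)..1, Real.exp (-(9*B₀)/16) * (deriv g0 u)^2 := by
      apply intervalIntegral.integral_mono_on (by norm_num)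
        ((by fun_prop : Continuous fun u => (deriv g0 u)^2 * Real.exp (-B₀*u^2)).intervalIntegrable _ _)
        (((by fun_prop : Continuous fun u => (deriv g0 u)^2).intervalIntegrable _ _).const_mul _)
      intro u hu
      rcases lt_or_ge (|u|) (3/4) with h | h
      · rw [deriv_g0_zero h]
        simp [Real.exp_nonneg]
      · have hu2 : (9:ℝ)/16 ≤ u^2 := by nlinarith [sq_abs u]
        rw [mul_comm (Real.exp (-(9*B₀)/16))]
        apply mul_le_mul_of_nonneg_left _ (sq_nonneg _)
        apply Real.exp_le_exp.2
        nlinarith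
    rw [intervalIntegral.integral_const_mul] at h1
    exact h1
  have hNnn : 0 ≤ N := intervalIntegral.integral_nonneg (by norm_num)
    (fun u _ => by positivity)
  -- the test function
  set c : ℝ := Real.sqrt D⁻¹ with hc
  have hc2 : c^2 = D⁻¹ := Real.sq_sqrt (by positivity)
  set ψ : ℝ → ℝ := fun u => c * (Real.exp (-(B₀*u^2)/2) * g0 u) with hψ
  have hψCD : ContDiff ℝ 1 ψ := by
    have h1 : ContDiff ℝ 1 fun u : ℝ => Real.exp (-(B₀*u^2)/2) :=
      Real.contDiff_exp.comp (((contDiff_const.mul (contDiff_id.pow 2)).neg).div_const 2)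
    exact (contDiff_const.mul (h1.mul g0_contDiff))
  have hψz : ∀ u : ℝ, 1 ≤ |u| → ψ u = 0 := by
    intro u hu; rw [hψ]; simp [g0_zero hu]
  have hψc : Continuous ψ := hψCD.continuous
  have hexpsq : ∀ u : ℝ, Real.exp (-(B₀*u^2)/2) * Real.exp (-(B₀*u^2)/2) = Real.exp (-B₀*u^2) := by
    intro u; rw [← Real.exp_add]; ring_nf
  have hψsq : ∀ u : ℝ, (ψ u)^2 = c^2 * ((g0 u)^2 * Real.exp (-B₀*u^2)) := by
    intro u
    rw [hψ]
    simp only []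
    rw [← hexpsq u]
    ring
  have hnorm : (∫ u in Set.Ioo (-1:ℝ) 1, (ψ u)^2) = 1 := by
    rw [ioo_int]
    have : (fun u => (ψ u)^2) = fun u => c^2 * ((g0 u)^2 * Real.exp (-B₀*u^2)) := funext hψsq
    rw [this, intervalIntegral.integral_const_mul, ← hD, hc2]
    field_simp
  -- derivative of ψ
  have hder : ∀ u : ℝ, HasDerivAt ψ
      (c * (Real.exp (-(B₀*u^2)/2) * deriv g0 u
        + (-B₀*u*Real.exp (-(B₀*u^2)/2)) * g0 u)) u := by
    intro u
    have hin : HasDerivAt (fun u : ℝ => -(B₀*u^2)/2) (-B₀*u) u := by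
      have := (((hasDerivAt_pow 2 u).const_mul B₀).neg).div_const 2
      refine this.congr_deriv ?_
      push_cast; ring
    have hexp : HasDerivAt (fun u : ℝ => Real.exp (-(B₀*u^2)/2))
        (-B₀*u*Real.exp (-(B₀*u^2)/2)) u := by
      have := hin.exp
      convert this using 1
      ring
    have hg : HasDerivAt g0 (deriv g0 u) u := (g0_contDiff.differentiable one_ne_zero u).hasDerivAt
    have := (hexp.mul hg).const_mul c
    refine this.congr_deriv ?_
    ring
  have hderiv : ∀ u : ℝ, deriv ψ u
      = c * (Real.exp (-(B₀*u^2)/2) * deriv g0 u + (-B₀*u*Real.exp (-(B₀*u^2)/2)) * g0 u) :=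
    fun u => (hder u).deriv
  -- w = deriv ψ + B₀ u ψ = c e g0'
  have hwid : ∀ u : ℝ, deriv ψ u + B₀*u*ψ u = c * Real.exp (-(B₀*u^2)/2) * deriv g0 u := by
    intro u
    rw [hderiv u, hψ]
    ring
  have hwsq : (fun u => (deriv ψ u + B₀*u*ψ u)^2)
      = fun u => c^2 * ((deriv g0 u)^2 * Real.exp (-B₀*u^2)) := by
    funext u
    rw [hwid u, ← hexpsq u]
    ring
  -- energy identity
  have hE : (∫ u in Set.Ioo (-1:ℝ) 1, ((deriv ψ u)^2 + B₀^2*u^2*(ψ u)^2))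
      = B₀ + c^2 * N := by
    rw [ioo_int, energy_identity B₀ ψ hψCD (hψz 1 (by norm_num)) (hψz (-1) (by norm_num)),
      ← ioo_int, hnorm, hwsq, intervalIntegral.integral_const_mul, ← hN]
    ring
  refine ⟨ψ, hψCD, hψz, hnorm, ?_⟩
  rw [hE]
  have hc2le : c^2 ≤ Real.sqrt B₀ * Real.exp 1 / 2 := by
    rw [hc2]
    have h1 : D⁻¹ ≤ (Real.exp (-1) * (2*s))⁻¹ :=
      inv_anti₀ (by positivity) hDlb
    have h2 : (Real.exp (-1) * (2*s))⁻¹ = Real.sqrt B₀ * Real.exp 1 / 2 := by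
      rw [hs, Real.exp_neg]
      field_simp
    linarith
  calc B₀ + c^2 * N ≤ B₀ + (Real.sqrt B₀ * Real.exp 1 / 2) * (Real.exp (-(9*B₀)/16) * K0) := by
        have := mul_le_mul hc2le hNub hNnn (by positivity)
        linarith
    _ = B₀ + Real.exp 1 / 2 * K0 * Real.sqrt B₀ * Real.exp (-(9*B₀)/16) := by ring

/-- The lowest Dirichlet eigenvalue `μ(B₀,1)` of `−d²/du² + B₀²u²` on `(−1,1)`, as the
infimum of the Rayleigh quotient over normalized `H¹₀((−1,1))` test functions. -/
noncomputable def dirichletHOGroundEnergy (B₀ : ℝ) : ℝ :=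
  sInf {E : ℝ | ∃ ψ : ℝ → ℝ, ContDiff ℝ 1 ψ ∧ (∀ u : ℝ, 1 ≤ |u| → ψ u = 0) ∧
    (∫ u in Set.Ioo (-1 : ℝ) 1, (ψ u) ^ 2) = 1 ∧
    E = ∫ u in Set.Ioo (-1 : ℝ) 1, ((deriv ψ u) ^ 2 + B₀ ^ 2 * u ^ 2 * (ψ u) ^ 2)}

lemma mu_bounds (B₀ : ℝ) (hB : 4 ≤ B₀) :
    B₀ + Real.exp (-B₀)/4 ≤ dirichletHOGroundEnergy B₀ ∧
    dirichletHOGroundEnergy B₀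
      ≤ B₀ + (Real.exp 1/2) * K0 * Real.sqrt B₀ * Real.exp (-(9*B₀)/16) := by
  obtain ⟨ψ, h1, h2, h3, h4⟩ := upper_aux B₀ hB
  have hlow : ∀ E ∈ {E : ℝ | ∃ ψ : ℝ → ℝ, ContDiff ℝ 1 ψ ∧ (∀ u : ℝ, 1 ≤ |u| → ψ u = 0) ∧
      (∫ u in Set.Ioo (-1 : ℝ) 1, (ψ u) ^ 2) = 1 ∧
      E = ∫ u in Set.Ioo (-1 : ℝ) 1, ((deriv ψ u) ^ 2 + B₀ ^ 2 * u ^ 2 * (ψ u) ^ 2)},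
      B₀ + Real.exp (-B₀)/4 ≤ E := by
    rintro E ⟨φ, hφ1, hφ2, hφ3, rfl⟩
    exact lower_aux B₀ (by linarith) φ hφ1 hφ2 hφ3
  have hmem : (∫ u in Set.Ioo (-1:ℝ) 1, ((deriv ψ u) ^ 2 + B₀ ^ 2 * u ^ 2 * (ψ u) ^ 2))
      ∈ {E : ℝ | ∃ ψ : ℝ → ℝ, ContDiff ℝ 1 ψ ∧ (∀ u : ℝ, 1 ≤ |u| → ψ u = 0) ∧
      (∫ u in Set.Ioo (-1 : ℝ) 1, (ψ u) ^ 2) = 1 ∧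
      E = ∫ u in Set.Ioo (-1 : ℝ) 1, ((deriv ψ u) ^ 2 + B₀ ^ 2 * u ^ 2 * (ψ u) ^ 2)} :=
    ⟨ψ, h1, h2, h3, rfl⟩
  constructor
  · exact le_csInf ⟨_, hmem⟩ hlow
  · exact le_trans (csInf_le ⟨B₀ + Real.exp (-B₀)/4, hlow⟩ hmem) h4

/-- `B₀ < μ(B₀,1) ≤ B₀ + (1+δ)·(√2/π^{1/4})·B₀^{5/4}e^{−B₀/2}` for large
`B₀`, hence `μ(B₀,1) = B₀ + O(B₀^{5/4}e^{−B₀/2})` as `B₀ → +∞`. -/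
theorem dirichletHOGroundEnergy_asymptotics :
    (∀ δ : ℝ, 0 < δ → ∀ᶠ B₀ : ℝ in atTop,
      B₀ < dirichletHOGroundEnergy B₀ ∧
      dirichletHOGroundEnergy B₀ ≤
        B₀ + (1 + δ) * (Real.sqrt 2 / Real.pi ^ ((1 : ℝ) / 4)) *
          B₀ ^ ((5 : ℝ) / 4) * Real.exp (-B₀ / 2)) ∧
    ∃ c : ℝ, ∀ᶠ B₀ : ℝ in atTop,
      |dirichletHOGroundEnergy B₀ - B₀| ≤ c * B₀ ^ ((5 : ℝ) / 4) * Real.exp (-B₀ / 2) := by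
  have main : ∀ δ : ℝ, 0 < δ → ∀ᶠ B₀ : ℝ in atTop,
      B₀ < dirichletHOGroundEnergy B₀ ∧
      dirichletHOGroundEnergy B₀ ≤
        B₀ + (1 + δ) * (Real.sqrt 2 / Real.pi ^ ((1 : ℝ) / 4)) *
          B₀ ^ ((5 : ℝ) / 4) * Real.exp (-B₀ / 2) := by
    intro δ hδ
    set A : ℝ := (1 + δ) * (Real.sqrt 2 / Real.pi ^ ((1 : ℝ) / 4)) with hA
    have hApos : 0 < A := by
      have h2 : (0:ℝ) < Real.sqrt 2 := Real.sqrt_pos.2 (by norm_num)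
      have hπ : (0:ℝ) < Real.pi ^ ((1:ℝ)/4) := Real.rpow_pos_of_pos Real.pi_pos _
      positivity
    have h1 : Tendsto (fun B₀ : ℝ => -B₀/16) atTop atBot := by
      apply Filter.Tendsto.atBot_div_const (by norm_num : (0:ℝ) < 16)
      exact tendsto_neg_atTop_atBot
    have htend : Tendsto (fun B₀ : ℝ => Real.exp 1/2 * K0 * Real.exp (-B₀/16))
        atTop (nhds 0) := by
      have := (Real.tendsto_exp_atBot.comp h1).const_mul (Real.exp 1/2 * K0)
      simpa using this
    have hev1 : ∀ᶠ B₀ : ℝ in atTop, Real.exp 1/2 * K0 * Real.exp (-B₀/16) < A :=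
      htend.eventually_lt_const hApos
    filter_upwards [hev1, eventually_ge_atTop (4:ℝ), eventually_ge_atTop (1:ℝ)]
      with B₀ hsm h4 h1b
    obtain ⟨hlo, hup⟩ := mu_bounds B₀ h4
    constructor
    · calc B₀ < B₀ + Real.exp (-B₀)/4 := by
            have := Real.exp_pos (-B₀); linarith
        _ ≤ _ := hlo
    · refine hup.trans ?_
      have e1 : Real.exp (-(9*B₀)/16) = Real.exp (-B₀/16) * Real.exp (-B₀/2) := by
        rw [← Real.exp_add]; ring_nf
      have hsqrt : Real.sqrt B₀ ≤ B₀ ^ ((5:ℝ)/4) := by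
        rw [Real.sqrt_eq_rpow]
        exact Real.rpow_le_rpow_of_exponent_le h1b (by norm_num)
      have step1 : Real.exp 1/2 * K0 * Real.sqrt B₀ * Real.exp (-(9*B₀)/16)
          = (Real.exp 1/2 * K0 * Real.exp (-B₀/16)) * (Real.sqrt B₀ * Real.exp (-B₀/2)) := by
        rw [e1]; ring
      have step2 : (Real.exp 1/2 * K0 * Real.exp (-B₀/16)) * (Real.sqrt B₀ * Real.exp (-B₀/2))
          ≤ A * (Real.sqrt B₀ * Real.exp (-B₀/2)) := by
        apply mul_le_mul_of_nonneg_right hsm.le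
        positivity
      have step3 : A * (Real.sqrt B₀ * Real.exp (-B₀/2))
          ≤ A * (B₀ ^ ((5:ℝ)/4) * Real.exp (-B₀/2)) := by
        apply mul_le_mul_of_nonneg_left _ hApos.le
        exact mul_le_mul_of_nonneg_right hsqrt (Real.exp_nonneg _)
      have : A * (B₀ ^ ((5:ℝ)/4) * Real.exp (-B₀/2))
          = (1 + δ) * (Real.sqrt 2 / Real.pi ^ ((1:ℝ)/4)) * B₀ ^ ((5:ℝ)/4)
            * Real.exp (-B₀/2) := by rw [hA]; ring
      linarith
  refine ⟨main, ⟨2 * (Real.sqrt 2 / Real.pi ^ ((1:ℝ)/4)), ?_⟩⟩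
  filter_upwards [main 1 one_pos] with B₀ hB
  obtain ⟨hlt, hle⟩ := hB
  rw [abs_of_pos (sub_pos.2 hlt)]
  have heq : (1 + 1) * (Real.sqrt 2 / Real.pi ^ ((1:ℝ)/4)) * B₀ ^ ((5:ℝ)/4) * Real.exp (-B₀/2)
      = 2 * (Real.sqrt 2 / Real.pi ^ ((1:ℝ)/4)) * B₀ ^ ((5:ℝ)/4) * Real.exp (-B₀/2) := by
    ring
  linarith
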